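/- Let m = 2^l·e > 2 with l ≥ 1 and e odd, and n = 2^m − 1. The binary cyclic code C_{S,1} := C(T_{(1,m)} ∪ {0}) has length n, dimension 2^{m−1} − 2, and its minimum distance d satisfies d ≥ 2^{m/2} + 2 if l ≥ 2, and d ≥ 2^{(m−2)/2} + 2 if l = 1. -/
import Mathlib


open Polynomial

noncomputable def wt2 (a : ℕ) : ℕ := (Nat.digits 2 a).sum

noncomputable def ell (m i : ℕ) : ℕ :=
  sInf {l : ℕ | 0 < l ∧ i * 2 ^ l % (2 ^ m - 1) = i % (2 ^ m - 1)}

noncomputable def coset (m i : ℕ) : Finset ℕ :=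
  (Finset.range (ell m i)).image (fun j => i * 2 ^ j % (2 ^ m - 1))

noncomputable def rho (m i : ℕ) : ℕ := ((coset m i).filter (fun x => x % 2 = 0)).card

noncomputable def vv (m i : ℕ) : ℕ := m * rho m i / ell m i % 2

noncomputable def Tset (m j : ℕ) : Finset ℕ :=
  (Finset.range (2 ^ m - 1)).filter (fun i => vv m i = j)

noncomputable def Nset (m j : ℕ) : Finset ℕ :=
  (Finset.range (2 ^ m - 1)).filter (fun a => a ≠ 0 ∧ wt2 a % 2 = j)

noncomputable def epsilon (h a : ℕ) : ℕ :=
  if a = 2 ^ h - 1 then 1 else sInf {t : ℕ | 2 ^ h - 1 ≤ 2 ^ t * a}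

noncomputable def kappa (h a : ℕ) : ℕ := epsilon h a % 2

noncomputable def leader (m i : ℕ) : ℕ := sInf {x : ℕ | x ∈ coset m i}

noncomputable def uu (m h i : ℕ) : ℕ :=
  if leader m i = 1 then (vv m 1 + h + 1) % 2
  else if leader m i % 2 = 1 ∧ leader m i ≤ 2 ^ h - 1 then
    (kappa h (leader m i) + vv m (leader m i)) % 2
  else vv m (leader m i)

noncomputable def Dset (m h j : ℕ) : Finset ℕ :=
  (Finset.range (2 ^ m - 1)).filter (fun i => uu m h i = j)

noncomputable def cyclicCode (m : ℕ) (α : GaloisField 2 m) (T : Set ℕ) :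
    Submodule (ZMod 2) (Polynomial (ZMod 2)) :=
  Polynomial.degreeLT (ZMod 2) (2 ^ m - 1) ⊓
    ⨅ j ∈ T, LinearMap.ker (Polynomial.aeval (α ^ j)).toLinearMap

def minDistGE (C : Submodule (ZMod 2) (Polynomial (ZMod 2))) (d : ℕ) : Prop :=
  ∀ c ∈ C, c ≠ 0 → d ≤ c.support.card



lemma wt2_zero : wt2 0 = 0 := by simp [wt2]

lemma wt2_rec (a : ℕ) (ha : a ≠ 0) : wt2 a = a % 2 + wt2 (a / 2) := by
  unfold wt2
  rw [Nat.digits_def' (by norm_num) (Nat.pos_of_ne_zero ha)]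
  simp

lemma wt2_one : wt2 1 = 1 := by simp [wt2]

lemma wt2_concat (h : ℕ) : ∀ u v : ℕ, u < 2 ^ h → wt2 (u + 2 ^ h * v) = wt2 u + wt2 v := by
  induction h with
  | zero =>
    intro u v hu
    interval_cases u
    simp [wt2_zero]
  | succ h ih =>
    intro u v hu
    have hp : (2:ℕ) ^ (h + 1) * v = 2 * (2 ^ h * v) := by ring
    have hp2 : (2:ℕ) ^ (h + 1) = 2 * 2 ^ h := by ring
    rcases Nat.eq_zero_or_pos v with rfl | hv
    · simp [wt2_zero]
    have hv' : 1 ≤ 2 ^ h * v := Nat.mul_pos (by positivity) hv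
    have hne : u + 2 ^ (h + 1) * v ≠ 0 := by omega
    rw [wt2_rec _ hne]
    have h1 : (u + 2 ^ (h + 1) * v) % 2 = u % 2 := by omega
    have h2 : (u + 2 ^ (h + 1) * v) / 2 = u / 2 + 2 ^ h * v := by omega
    rw [h1, h2, ih (u / 2) v (by omega)]
    rcases Nat.eq_zero_or_pos u with rfl | hu0
    · simp [wt2_zero]
    · rw [wt2_rec u (by omega)]; ring

lemma wt2_two_pow_sub_one (h : ℕ) : wt2 (2 ^ h - 1) = h := by
  induction h with
  | zero => simp [wt2_zero]
  | succ h ih =>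
    have h2 : (2:ℕ) ^ (h+1) = 2 * 2 ^ h := by ring
    have hh : (1:ℕ) ≤ 2 ^ h := Nat.one_le_two_pow
    have hne : (2:ℕ) ^ (h+1) - 1 ≠ 0 := by omega
    rw [wt2_rec _ hne]
    have e1 : (2 ^ (h+1) - 1) % 2 = 1 := by omega
    have e2 : (2 ^ (h+1) - 1) / 2 = 2 ^ h - 1 := by omega
    rw [e1, e2, ih]
    omega

lemma wt2_compl (h : ℕ) : ∀ a : ℕ, a < 2 ^ h → wt2 a + wt2 (2 ^ h - 1 - a) = h := by
  induction h with
  | zero => intro a ha; interval_cases a; simp [wt2_zero]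
  | succ h ih =>
    intro a ha
    have hp : (2:ℕ) ^ (h + 1) = 2 * 2 ^ h := by ring
    have hh : (1:ℕ) ≤ 2 ^ h := Nat.one_le_two_pow
    rcases Nat.eq_zero_or_pos a with rfl | ha0
    · simp [wt2_zero, wt2_two_pow_sub_one]
    rcases Nat.eq_zero_or_pos (2 ^ (h+1) - 1 - a) with hb0 | hbpos
    · have haa : a = 2 ^ (h+1) - 1 := by omega
      rw [hb0, wt2_zero, haa, wt2_two_pow_sub_one]
    rw [wt2_rec a (by omega), wt2_rec (2 ^ (h+1) - 1 - a) (by omega)]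
    have hmod : a % 2 + (2 ^ (h+1) - 1 - a) % 2 = 1 := by omega
    have hdiv : (2 ^ (h+1) - 1 - a) / 2 = 2 ^ h - 1 - a / 2 := by omega
    rw [hdiv]
    have := ih (a / 2) (by omega)
    omega

lemma wt2_mul_pred_pow (h : ℕ) (j : ℕ) (hj1 : 0 < j) (hj2 : j ≤ 2 ^ h) :
    wt2 (j * (2 ^ h - 1)) = h := by
  have hh : (1:ℕ) ≤ 2 ^ h := Nat.one_le_two_pow
  have key : j * (2 ^ h - 1) = (2 ^ h - j) + 2 ^ h * (j - 1) := by
    have h1 : j * (2 ^ h - 1) = j * 2 ^ h - j * 1 := Nat.mul_sub j (2^h) 1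
    have h1' : j * 1 ≤ j * 2 ^ h := Nat.mul_le_mul_left j hh
    have h2 : (2:ℕ) ^ h * (j - 1) = 2 ^ h * j - 2 ^ h * 1 := Nat.mul_sub (2^h) j 1
    have h2' : (2:ℕ) ^ h * 1 ≤ 2 ^ h * j := Nat.mul_le_mul_left (2^h) hj1
    have h3 : j * 2 ^ h = 2 ^ h * j := by ring
    omega
  rw [key, wt2_concat h _ _ (by omega)]
  have hc := wt2_compl h (j - 1) (by omega)
  have e : 2 ^ h - 1 - (j - 1) = 2 ^ h - j := by omega
  rw [e] at hc
  omega

lemma wt2_le (m : ℕ) : ∀ a, a < 2 ^ m → wt2 a ≤ m := by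
  induction m with
  | zero => intro a ha; interval_cases a; simp [wt2_zero]
  | succ m ih =>
    intro a ha
    have hp : (2:ℕ) ^ (m + 1) = 2 * 2 ^ m := by ring
    rcases Nat.eq_zero_or_pos a with rfl | ha0
    · simp [wt2_zero]
    rw [wt2_rec a (by omega)]
    have := ih (a / 2) (by omega)
    omega

lemma wt2_eq_sum_bits (m : ℕ) : ∀ i, i < 2 ^ m → wt2 i = ∑ k ∈ Finset.range m, i / 2 ^ k % 2 := by
  induction m with
  | zero => intro i hi; interval_cases i; simp [wt2_zero]
  | succ m ih =>
    intro i hi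
    rw [Finset.sum_range_succ']
    simp only [pow_zero, Nat.div_one]
    have e : ∀ k : ℕ, i / 2 ^ (k + 1) = (i / 2) / 2 ^ k := by
      intro k
      rw [Nat.div_div_eq_div_mul, ← pow_succ']
    simp only [e]
    have hp : (2:ℕ) ^ (m + 1) = 2 * 2 ^ m := by ring
    rw [← ih (i / 2) (by omega)]
    rcases Nat.eq_zero_or_pos i with rfl | hi0
    · simp [wt2_zero]
    · rw [wt2_rec i (by omega)]; omega

theorem vv_eq (m i : ℕ) (hm : 0 < m) (hi : i < 2 ^ m - 1) :
    vv m i = (m - wt2 i) % 2 := by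
  have hpm : (1:ℕ) ≤ 2 ^ m := Nat.one_le_two_pow
  set n := 2 ^ m - 1 with hn
  rcases Nat.eq_zero_or_pos i with rfl | hi0
  · have h1 : (1:ℕ) ∈ {l : ℕ | 0 < l ∧ 0 * 2 ^ l % n = 0 % n} := by simp
    have hell : ell m 0 = 1 := by
      have h2 : ell m 0 ≤ 1 := Nat.sInf_le h1
      have h3 : ell m 0 ∈ {l : ℕ | 0 < l ∧ 0 * 2 ^ l % n = 0 % n} :=
        Nat.sInf_mem (⟨1, h1⟩ : Set.Nonempty _)
      have := h3.1
      omega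
    have hcos : coset m 0 = {0} := by
      unfold coset
      rw [hell]
      simp
    have hrho : rho m 0 = 1 := by
      unfold rho
      rw [hcos, Finset.filter_singleton]
      norm_num
    unfold vv
    rw [hell, hrho, wt2_zero]
    simp
  · have hn2 : 2 ≤ n := by omega
    have hn0 : 0 < n := by omega
    have h2mn : 2 ^ m = n + 1 := by omega
    have himod : i % n = i := Nat.mod_eq_of_lt hi
    set r : ℕ → ℕ := fun j => i * 2 ^ j % n with hr
    have hrm : r m = i := by
      show i * 2 ^ m % n = i
      rw [h2mn]
      have he : i * (n + 1) = i + i * n := by ring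
      rw [he, Nat.add_mul_mod_self_right, himod]
    have radd : ∀ j k, r (j + k) = r j * 2 ^ k % n := by
      intro j k
      show i * 2 ^ (j + k) % n = i * 2 ^ j % n * 2 ^ k % n
      rw [Nat.mod_mul_mod, pow_add, mul_assoc]
    set S := {l : ℕ | 0 < l ∧ i * 2 ^ l % n = i % n} with hSdef
    have hells : ell m i = sInf S := rfl
    have hmS : m ∈ S := ⟨hm, by rw [show i * 2 ^ m % n = i from hrm, himod]⟩
    set L := ell m i with hLdef
    have hLS : L ∈ S := by rw [hells]; exact Nat.sInf_mem ⟨m, hmS⟩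
    have hLpos : 0 < L := hLS.1
    have hrL : r L = i := by
      have h := hLS.2
      rwa [himod] at h
    have hLmin : ∀ l ∈ S, L ≤ l := by
      intro l hl; rw [hells]; exact Nat.sInf_le hl
    have rper : ∀ j, r (j + L) = r j := by
      intro j
      rw [add_comm, radd, hrL]
    have rmult : ∀ q j, r (j + q * L) = r j := by
      intro q
      induction q with
      | zero => simp
      | succ q ih =>
        intro j
        have he : j + (q + 1) * L = (j + q * L) + L := by ring
        rw [he, rper, ih]
    have rmod : ∀ j, r j = r (j % L) := by
      intro j
      conv_lhs => rw [show j = j % L + (j / L) * L from (Nat.mod_add_div' j L).symm]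
      rw [rmult]
    have hdvd : L ∣ m := by
      rcases Nat.eq_zero_or_pos (m % L) with h0 | hpos
      · exact Nat.dvd_of_mod_eq_zero h0
      · exfalso
        have h1 : r (m % L) = i := by rw [← rmod, hrm]
        have h2 : m % L ∈ S := ⟨hpos, by rw [show i * 2 ^ (m % L) % n = i from h1, himod]⟩
        have h3 := hLmin _ h2
        have h4 := Nat.mod_lt m hLpos
        omega
    have injL : ∀ j k, j < L → k < L → r j = r k → j = k := by
      have core : ∀ j k, j < k → k < L → r j ≠ r k := by
        intro j k hjk hkL heq
        have h1 : r (j + (L - k)) = r (k + (L - k)) := by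
          rw [radd, radd, heq]
        rw [show k + (L - k) = L by omega, hrL] at h1
        have h2 : j + (L - k) ∈ S :=
          ⟨by omega, by rw [show i * 2 ^ (j + (L - k)) % n = i from h1, himod]⟩
        have h3 := hLmin _ h2
        omega
      intro j k hj hk heq
      rcases lt_trichotomy j k with h | h | h
      · exact absurd heq (core j k h hk)
      · exact h
      · exact absurd heq.symm (core k j h hj)
    have hcos : coset m i = (Finset.range L).image r := rfl
    have hrho : rho m i = ((Finset.range L).filter (fun j => r j % 2 = 0)).card := by
      unfold rho
      rw [hcos, Finset.filter_image]
      apply Finset.card_image_of_injOn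
      intro a ha b hb hab
      simp only [Finset.coe_filter, Set.mem_setOf_eq, Finset.mem_range] at ha hb
      exact injL a b ha.1 hb.1 hab
    have block : ∀ q : ℕ, ((Finset.range (q * L)).filter (fun j => r j % 2 = 0)).card
        = q * ((Finset.range L).filter (fun j => r j % 2 = 0)).card := by
      intro q
      induction q with
      | zero => simp
      | succ q ih =>
        have hsplit : Finset.range ((q + 1) * L) =
            Finset.range (q * L) ∪ (Finset.range L).map (addLeftEmbedding (q * L)) := by
          rw [show (q + 1) * L = q * L + L by ring, Finset.range_add]
        rw [hsplit, Finset.filter_union, Finset.card_union_of_disjoint, ih]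
        · rw [Finset.filter_map, Finset.card_map]
          have he : Finset.filter ((fun j => r j % 2 = 0) ∘ ⇑(addLeftEmbedding (q * L)))
              (Finset.range L) = Finset.filter (fun j => r j % 2 = 0) (Finset.range L) := by
            apply Finset.filter_congr
            intro x hx
            simp only [Function.comp_apply, addLeftEmbedding_apply]
            rw [show q * L + x = x + q * L by ring, rmult]
          rw [he]
          ring
        · apply Finset.disjoint_filter_filter
          rw [Finset.disjoint_left]
          intro a ha hb
          simp only [Finset.mem_range] at ha
          simp only [Finset.mem_map, addLeftEmbedding_apply, Finset.mem_range] at hb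
          obtain ⟨b, _, rfl⟩ := hb
          omega
    have hcnt : ((Finset.range m).filter (fun j => r j % 2 = 0)).card = (m / L) * rho m i := by
      rw [hrho, ← block (m / L), Nat.div_mul_cancel hdvd]
    have hbit : ∀ j, j < m → r j % 2 = i / 2 ^ ((m - j) % m) % 2 := by
      intro j hj
      rcases Nat.eq_zero_or_pos j with rfl | hjpos
      · simp only [Nat.sub_zero, Nat.mod_self, pow_zero, Nat.div_one]
        show i * 2 ^ 0 % n % 2 = i % 2
        simp [himod]
      · have hk : (m - j) % m = m - j := Nat.mod_eq_of_lt (by omega)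
        rw [hk]
        have hBA : 2 ^ (m - j) * 2 ^ j = 2 ^ m := by rw [← pow_add]; congr 1; omega
        set k := m - j with hkdef
        set A := 2 ^ j with hAdef
        set B := 2 ^ k with hBdef
        set a := i % B with hadef
        set b := i / B with hbdef
        have hApos : 0 < A := by positivity
        have hBpos : 0 < B := by positivity
        have haB : a < B := Nat.mod_lt _ hBpos
        have hbA : b < A := by
          rw [hbdef, Nat.div_lt_iff_lt_mul hBpos]
          calc i < 2 ^ m := by omega
            _ = A * B := by rw [← hBA]; ring
        have hiab : i = a + B * b := by rw [hadef, hbdef]; exact (Nat.mod_add_div i B).symm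
        have hle : a * A ≤ (B - 1) * A := Nat.mul_le_mul_right A (by omega)
        have hexp : (B - 1) * A = B * A - A := by rw [Nat.sub_mul, one_mul]
        have hBAn : B * A = n + 1 := by rw [← h2mn, ← hBA]
        have hAle : A ≤ B * A := Nat.le_mul_of_pos_left A hBpos
        have hlt : a * A + b < n := by
          by_contra hcon
          push_neg at hcon
          have h1 : a * A = B * A - A := by omega
          have h3 : a = B - 1 := by
            apply Nat.eq_of_mul_eq_mul_right hApos
            rw [h1, ← hexp]
          have h2 : b = A - 1 := by omega
          have h4 : B * b = B * A - B := by rw [h2, Nat.mul_sub, mul_one]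
          have hBle : B ≤ B * A := Nat.le_mul_of_pos_right B hApos
          omega
        have hvalue : r j = a * A + b := by
          show i * A % n = a * A + b
          have t1 : i * A = a * A + b * (B * A) := by rw [hiab]; ring
          have t2 : b * (B * A) = b + b * n := by rw [hBAn]; ring
          rw [t1, t2, ← add_assoc, Nat.add_mul_mod_self_right]
          exact Nat.mod_eq_of_lt hlt
        have hAeven : 2 ∣ A := dvd_pow_self 2 (by omega)
        have hdv : 2 ∣ a * A := Dvd.dvd.mul_left hAeven a
        rw [hvalue]
        omega
    have hinv : ∀ a, a < m → (m - ((m - a) % m)) % m = a := by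
      intro a ha
      rcases Nat.eq_zero_or_pos a with rfl | hapos
      · simp
      · rw [Nat.mod_eq_of_lt (show m - a < m by omega), Nat.mod_eq_of_lt (by omega)]
        omega
    have hreidx : ((Finset.range m).filter (fun j => r j % 2 = 0)).card
        = ((Finset.range m).filter (fun k => i / 2 ^ k % 2 = 0)).card := by
      apply Finset.card_bij' (fun j _ => (m - j) % m) (fun k _ => (m - k) % m)
      · intro a ha
        rw [Finset.mem_filter, Finset.mem_range] at ha ⊢
        refine ⟨Nat.mod_lt _ hm, ?_⟩
        rw [← hbit a ha.1]
        exact ha.2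
      · intro k hk
        rw [Finset.mem_filter, Finset.mem_range] at hk ⊢
        refine ⟨Nat.mod_lt _ hm, ?_⟩
        rw [hbit _ (Nat.mod_lt _ hm), hinv k hk.1]
        exact hk.2
      · intro a ha
        rw [Finset.mem_filter, Finset.mem_range] at ha
        exact hinv a ha.1
      · intro k hk
        rw [Finset.mem_filter, Finset.mem_range] at hk
        exact hinv k hk.1
    have hwtsum : wt2 i = ((Finset.range m).filter (fun k => ¬ (i / 2 ^ k % 2 = 0))).card := by
      rw [wt2_eq_sum_bits m i (by omega), Finset.card_filter]
      apply Finset.sum_congr rfl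
      intro k _
      rcases Nat.mod_two_eq_zero_or_one (i / 2 ^ k) with h | h <;> simp [h]
    have hfinal : ((Finset.range m).filter (fun k => i / 2 ^ k % 2 = 0)).card = m - wt2 i := by
      have h := Finset.card_filter_add_card_filter_not
        (s := Finset.range m) (p := fun k => i / 2 ^ k % 2 = 0)
      rw [Finset.card_range] at h
      omega
    have hkey : (m / L) * rho m i = m - wt2 i := by rw [← hcnt, hreidx, hfinal]
    have hmul : m * rho m i = L * ((m / L) * rho m i) := by
      calc m * rho m i = (L * (m / L)) * rho m i := by rw [Nat.mul_div_cancel' hdvd]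
        _ = L * ((m / L) * rho m i) := by ring
    have hdivL : m * rho m i / L = (m / L) * rho m i := by
      rw [hmul, Nat.mul_div_cancel_left _ hLpos]
    unfold vv
    rw [← hLdef, hdivL, hkey]

lemma card_odd_wt (m : ℕ) (hm : 0 < m) :
    ((Finset.range (2 ^ m)).filter (fun i => wt2 i % 2 = 1)).card = 2 ^ (m - 1) := by
  obtain ⟨k, rfl⟩ : ∃ k, m = k + 1 := ⟨m - 1, by omega⟩
  have hsplit : Finset.range (2 ^ (k + 1)) =
      Finset.range (2 ^ k) ∪ (Finset.range (2 ^ k)).map (addLeftEmbedding (2 ^ k)) := by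
    rw [← Finset.range_add]
    congr 1
    ring
  rw [hsplit, Finset.filter_union, Finset.card_union_of_disjoint, Finset.filter_map,
    Finset.card_map]
  · have he : Finset.filter ((fun i => wt2 i % 2 = 1) ∘ ⇑(addLeftEmbedding (2 ^ k)))
        (Finset.range (2 ^ k)) = Finset.filter (fun i => ¬ (wt2 i % 2 = 1)) (Finset.range (2 ^ k)) := by
      apply Finset.filter_congr
      intro x hx
      simp only [Finset.mem_range] at hx
      simp only [Function.comp_apply, addLeftEmbedding_apply]
      rw [show 2 ^ k + x = x + 2 ^ k * 1 by ring, wt2_concat k x 1 hx, wt2_one]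
      constructor
      · intro h1 h2; omega
      · intro h1; omega
    rw [he, Finset.card_filter_add_card_filter_not, Finset.card_range]
    simp
  · apply Finset.disjoint_filter_filter
    rw [Finset.disjoint_left]
    intro a ha hb
    simp only [Finset.mem_range] at ha
    simp only [Finset.mem_map, addLeftEmbedding_apply, Finset.mem_range] at hb
    obtain ⟨b, _, rfl⟩ := hb
    omega



lemma card_odd_wt_range_n (m : ℕ) (hm : 0 < m) (hme : m % 2 = 0) :
    ((Finset.range (2 ^ m - 1)).filter (fun i => wt2 i % 2 = 1)).card = 2 ^ (m - 1) := by
  have h1 : (1:ℕ) ≤ 2 ^ m := Nat.one_le_two_pow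
  have hr : Finset.range (2 ^ m) = insert (2 ^ m - 1) (Finset.range (2 ^ m - 1)) := by
    rw [← Finset.range_add_one]
    congr 1
    omega
  have := card_odd_wt m hm
  rw [hr, Finset.filter_insert] at this
  rw [wt2_two_pow_sub_one] at this
  rw [if_neg (by omega)] at this
  exact this

lemma two_pow_mod_pred (a b : ℕ) (ha : 0 < a) : (2 ^ b - 1) % (2 ^ a - 1) = 2 ^ (b % a) - 1 := by
  have hx : (1:ℕ) ≤ 2 ^ (b % a) := Nat.one_le_two_pow
  have hy : (1:ℕ) ≤ (2 ^ a) ^ (b / a) := Nat.one_le_pow _ _ (by norm_num)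
  have ha1 : (1:ℕ) ≤ 2 ^ a := Nat.one_le_two_pow
  have hlt : 2 ^ (b % a) < 2 ^ a := Nat.pow_lt_pow_right (by norm_num) (Nat.mod_lt b ha)
  have hsplit : 2 ^ b = 2 ^ (b % a) * (2 ^ a) ^ (b / a) := by
    rw [← pow_mul, ← pow_add]
    congr 1
    exact (Nat.mod_add_div b a).symm
  obtain ⟨t, ht⟩ : (2 ^ a - 1) ∣ ((2 ^ a) ^ (b / a) - 1 ^ (b / a)) :=
    Nat.sub_dvd_pow_sub_pow _ _ _
  rw [one_pow] at ht
  have hm1 : 2 ^ (b % a) * ((2 ^ a) ^ (b / a) - 1) = 2 ^ b - 2 ^ (b % a) := by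
    rw [Nat.mul_sub, mul_one, ← hsplit]
  have hkey : 2 ^ b - 1 = (2 ^ (b % a) - 1) + (2 ^ (b % a) * t) * (2 ^ a - 1) := by
    have h2 : 2 ^ (b % a) * t * (2 ^ a - 1) = 2 ^ (b % a) * ((2 ^ a - 1) * t) := by ring
    rw [h2, ← ht, hm1]
    have hle : 2 ^ (b % a) ≤ 2 ^ b := by
      rw [hsplit]
      exact Nat.le_mul_of_pos_right _ (by positivity)
    omega
  rw [hkey, Nat.add_mul_mod_self_right]
  exact Nat.mod_eq_of_lt (by omega)

lemma gcd_two_pow_sub_one : ∀ a, ∀ b, Nat.gcd (2 ^ a - 1) (2 ^ b - 1) = 2 ^ (Nat.gcd a b) - 1 := by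
  intro a
  induction a using Nat.strong_induction_on with
  | _ a ih =>
    intro b
    rcases Nat.eq_zero_or_pos a with rfl | ha
    · simp
    have h1 : (1:ℕ) ≤ 2 ^ a := Nat.one_le_two_pow
    rcases Nat.eq_zero_or_pos (2 ^ a - 1) with h0 | hpos
    · -- impossible unless a = 0
      exfalso
      have : (2:ℕ) ^ a ≥ 2 ^ 1 := Nat.pow_le_pow_right (by norm_num) ha
      omega
    rw [Nat.gcd_rec (2 ^ a - 1) (2 ^ b - 1), two_pow_mod_pred a b ha,
      ih (b % a) (Nat.mod_lt b ha) a, Nat.gcd_rec a b]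

lemma zmod2_ne_zero (z : ZMod 2) (hz : z ≠ 0) : z = 1 := by
  revert hz
  revert z
  decide

lemma bch_bound (m : ℕ) (hm : 0 < m) (α : GaloisField 2 m) (hα : orderOf α = 2 ^ m - 1)
    (a b D : ℕ) (ha : Nat.Coprime a (2 ^ m - 1))
    (c : Polynomial (ZMod 2)) (hdeg : c ∈ Polynomial.degreeLT (ZMod 2) (2 ^ m - 1))
    (hzero : ∀ j : ℕ, j ≤ D → Polynomial.aeval (α ^ ((b + j * a) % (2 ^ m - 1))) c = 0)
    (hc : c ≠ 0) : D + 2 ≤ c.support.card := by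
  set n := 2 ^ m - 1 with hn
  have hpm : (1:ℕ) ≤ 2 ^ m := Nat.one_le_two_pow
  have hn0 : 0 < n := by
    have : (2:ℕ) ^ 1 ≤ 2 ^ m := Nat.pow_le_pow_right (by norm_num) hm
    omega
  have hα1 : α ^ n = 1 := by rw [← hα]; exact pow_orderOf_eq_one α
  have hαne : α ≠ 0 := by
    intro h0
    rw [h0, zero_pow (by omega)] at hα1
    exact zero_ne_one hα1
  by_contra hcon
  push_neg at hcon
  set w := c.support.card with hw
  have hw1 : 0 < w := by
    rw [hw, Finset.card_pos, Finset.nonempty_iff_ne_empty]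
    simpa using hc
  have hwD : w ≤ D + 1 := by omega
  -- enumerate the support
  obtain ⟨σ⟩ : Nonempty (Fin w ≃ {x // x ∈ c.support}) := ⟨c.support.equivFin.symm⟩
  set s : Fin w → ℕ := fun i => (σ i : ℕ) with hs
  have hs_mem : ∀ i, s i ∈ c.support := fun i => (σ i).2
  have hs_inj : Function.Injective s := by
    intro i j hij
    exact σ.injective (Subtype.ext hij)
  have hs_lt : ∀ i, s i < n := by
    intro i
    have h1 : c.coeff (s i) ≠ 0 := Polynomial.mem_support_iff.mp (hs_mem i)
    have h2 : (s i : WithBot ℕ) ≤ c.degree := Polynomial.le_degree_of_ne_zero h1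
    have h3 : c.degree < (n : WithBot ℕ) := Polynomial.mem_degreeLT.mp hdeg
    have h4 : (s i : WithBot ℕ) < (n : WithBot ℕ) := lt_of_le_of_lt h2 h3
    exact_mod_cast h4
  -- the evaluation equations
  have heval : ∀ j : ℕ, j ≤ D →
      ∑ i : Fin w, (α ^ (a * s i)) ^ j * α ^ (b * s i) = 0 := by
    intro j hj
    have h0 := hzero j hj
    rw [Polynomial.aeval_def, Polynomial.eval₂_eq_sum, Polynomial.sum_def] at h0
    have hpow : ∀ k : ℕ, (α ^ ((b + j * a) % n)) ^ k = (α ^ (a * k)) ^ j * α ^ (b * k) := by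
      intro k
      have h1 : (α ^ ((b + j * a) % n)) = α ^ (b + j * a) := by
        rw [← hα]
        exact pow_mod_orderOf α _
      rw [h1, ← pow_mul, ← pow_mul, ← pow_add]
      congr 1
      ring
    have hcoeff : ∀ k ∈ c.support,
        (algebraMap (ZMod 2) (GaloisField 2 m)) (c.coeff k) * (α ^ ((b + j * a) % n)) ^ k
          = (α ^ (a * k)) ^ j * α ^ (b * k) := by
      intro k hk
      have h1 : c.coeff k ≠ 0 := Polynomial.mem_support_iff.mp hk
      rw [zmod2_ne_zero _ h1, map_one, one_mul, hpow]
    rw [Finset.sum_congr rfl hcoeff] at h0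
    -- reindex sum over support by Fin w
    have hre : ∑ k ∈ c.support, (α ^ (a * k)) ^ j * α ^ (b * k)
        = ∑ i : Fin w, (α ^ (a * s i)) ^ j * α ^ (b * s i) := by
      rw [← Finset.sum_coe_sort c.support (fun k => (α ^ (a * k)) ^ j * α ^ (b * k))]
      exact (Equiv.sum_comp σ (fun k => (α ^ (a * (k:ℕ))) ^ j * α ^ (b * (k:ℕ)))).symm
    rw [hre] at h0
    exact h0
  -- Vandermonde
  obtain ⟨u, hu⟩ : ∃ u : (GaloisField 2 m)ˣ, (u : GaloisField 2 m) = α :=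
    ⟨(isUnit_iff_ne_zero.mpr hαne).unit, rfl⟩
  have huord : orderOf u = n := by rw [← hα, ← orderOf_units, hu]
  set x : Fin w → GaloisField 2 m := fun i => α ^ (a * s i) with hx
  have hx_inj : Function.Injective x := by
    intro i j hij
    have hij' : u ^ (a * s i) = u ^ (a * s j) := by
      apply Units.ext
      rw [Units.val_pow_eq_pow_val, Units.val_pow_eq_pow_val, hu]
      exact hij
    have h1 : a * s i ≡ a * s j [MOD orderOf u] := (pow_eq_pow_iff_modEq).mp hij'
    rw [huord] at h1
    have h2 : s i ≡ s j [MOD n] := Nat.ModEq.cancel_left_of_coprime (by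
      have := ha.symm
      exact this) h1
    have h3 : s i = s j := by
      have := h2
      unfold Nat.ModEq at this
      rw [Nat.mod_eq_of_lt (hs_lt i), Nat.mod_eq_of_lt (hs_lt j)] at this
      exact this
    exact hs_inj h3
  set M : Matrix (Fin w) (Fin w) (GaloisField 2 m) := (Matrix.vandermonde x).transpose with hM
  set y : Fin w → GaloisField 2 m := fun i => α ^ (b * s i) with hy
  have hMy : M.mulVec y = 0 := by
    funext j
    show ∑ i, M j i * y i = 0
    have : ∀ i, M j i * y i = (x i) ^ (j : ℕ) * α ^ (b * s i) := by
      intro i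
      rfl
    rw [Finset.sum_congr rfl (fun i _ => this i)]
    exact heval (j : ℕ) (by omega)
  have hdet : M.det ≠ 0 := by
    rw [Matrix.det_transpose, Matrix.det_vandermonde]
    apply Finset.prod_ne_zero_iff.mpr
    intro i _
    apply Finset.prod_ne_zero_iff.mpr
    intro j hj
    rw [Finset.mem_Ioi] at hj
    exact sub_ne_zero_of_ne (fun hxy => absurd (hx_inj hxy.symm) (ne_of_lt hj))
  have hy0 : y = 0 := by
    have hU : IsUnit M.det := isUnit_iff_ne_zero.mpr hdet
    calc y = (1 : Matrix (Fin w) (Fin w) (GaloisField 2 m)).mulVec y := by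
          rw [Matrix.one_mulVec]
      _ = (M⁻¹ * M).mulVec y := by rw [Matrix.nonsing_inv_mul M hU]
      _ = M⁻¹.mulVec (M.mulVec y) := by rw [Matrix.mulVec_mulVec]
      _ = 0 := by rw [hMy, Matrix.mulVec_zero]
  have : y ⟨0, hw1⟩ = 0 := by rw [hy0]; rfl
  have : α ^ (b * s ⟨0, hw1⟩) = 0 := this
  exact pow_ne_zero _ hαne this

lemma mem_cyclicCode (m : ℕ) (α : GaloisField 2 m) (T : Finset ℕ) (c : Polynomial (ZMod 2)) :
    c ∈ cyclicCode m α ↑T ↔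
      c ∈ Polynomial.degreeLT (ZMod 2) (2 ^ m - 1) ∧ ∀ j ∈ T, Polynomial.aeval (α ^ j) c = 0 := by
  unfold cyclicCode
  rw [Submodule.mem_inf]
  simp only [Submodule.mem_iInf, LinearMap.mem_ker, AlgHom.toLinearMap_apply, Finset.mem_coe]

lemma cyclic_dim (m : ℕ) (hm : 0 < m) (α : GaloisField 2 m) (hα : orderOf α = 2 ^ m - 1)
    (T : Finset ℕ) (hTsub : ∀ j ∈ T, j < 2 ^ m - 1)
    (hTcl : ∀ j ∈ T, 2 * j % (2 ^ m - 1) ∈ T) :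
    Module.finrank (ZMod 2) (cyclicCode m α ↑T) = (2 ^ m - 1) - T.card := by
  classical
  set n := 2 ^ m - 1 with hn
  have hpm : (1:ℕ) ≤ 2 ^ m := Nat.one_le_two_pow
  have hn0 : 0 < n := by
    have : (2:ℕ) ^ 1 ≤ 2 ^ m := Nat.pow_le_pow_right (by norm_num) hm
    omega
  have hnodd : n % 2 = 1 := by
    have h2 : (2:ℕ) ∣ 2 ^ m := dvd_pow_self 2 (by omega)
    omega
  have hα1 : α ^ n = 1 := by rw [← hα]; exact pow_orderOf_eq_one α
  have hαne : α ≠ 0 := by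
    intro h0
    rw [h0, zero_pow (by omega)] at hα1
    exact zero_ne_one hα1
  obtain ⟨u, hu⟩ : ∃ u : (GaloisField 2 m)ˣ, (u : GaloisField 2 m) = α := ⟨(isUnit_iff_ne_zero.mpr hαne).unit, rfl⟩
  have huord : orderOf u = n := by rw [← hα, ← orderOf_units, hu]
  have hrootinj : ∀ j k : ℕ, j < n → k < n → α ^ j = α ^ k → j = k := by
    intro j k hj hk hjk
    have hjk' : u ^ j = u ^ k := by
      apply Units.ext
      rw [Units.val_pow_eq_pow_val, Units.val_pow_eq_pow_val, hu]
      exact hjk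
    have h1 : j ≡ k [MOD orderOf u] := (pow_eq_pow_iff_modEq).mp hjk'
    rw [huord] at h1
    unfold Nat.ModEq at h1
    rw [Nat.mod_eq_of_lt hj, Nat.mod_eq_of_lt hk] at h1
    exact h1
  -- doubling is a bijection of T
  have hdinj : Set.InjOn (fun j => 2 * j % n) ↑T := by
    intro j hj k hk hjk
    simp only at hjk
    have h1 : 2 * j ≡ 2 * k [MOD n] := by
      unfold Nat.ModEq
      exact hjk
    have hcop2 : Nat.gcd n 2 = 1 := by
      have hd1 : Nat.gcd n 2 ∣ 2 := Nat.gcd_dvd_right n 2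
      have hd2 : Nat.gcd n 2 ∣ n := Nat.gcd_dvd_left n 2
      rcases (Nat.dvd_prime Nat.prime_two).mp hd1 with h | h
      · exact h
      · exfalso
        rw [h] at hd2
        obtain ⟨t, ht⟩ := hd2
        omega
    have h2 : j ≡ k [MOD n] := Nat.ModEq.cancel_left_of_coprime hcop2 h1
    unfold Nat.ModEq at h2
    rw [Nat.mod_eq_of_lt (hTsub j hj), Nat.mod_eq_of_lt (hTsub k hk)] at h2
    exact h2
  have himage : T.image (fun j => 2 * j % n) = T := by
    apply Finset.eq_of_subset_of_card_le
    · intro k hk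
      rw [Finset.mem_image] at hk
      obtain ⟨j, hj, rfl⟩ := hk
      exact hTcl j hj
    · rw [Finset.card_image_of_injOn hdinj]
  set g : Polynomial (GaloisField 2 m) := ∏ j ∈ T, (X - C (α ^ j)) with hg
  have hgmonic : g.Monic := monic_prod_of_monic _ _ (fun j _ => monic_X_sub_C _)
  have hgdeg : g.natDegree = T.card := by
    rw [hg, natDegree_prod_of_monic _ _ (fun j _ => monic_X_sub_C _)]
    simp only [natDegree_X_sub_C]
    rw [Finset.sum_const, smul_eq_mul, mul_one]
  -- Frobenius invariance
  have hfrob : Polynomial.map (frobenius (GaloisField 2 m) 2) g = g := by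
    rw [hg, Polynomial.map_prod]
    have he : ∀ j ∈ T, Polynomial.map (frobenius (GaloisField 2 m) 2) (X - C (α ^ j))
        = X - C (α ^ (2 * j % n)) := by
      intro j hj
      rw [Polynomial.map_sub, Polynomial.map_X, Polynomial.map_C]
      congr 1
      rw [frobenius_def]
      rw [← pow_mul, ← hα, pow_mod_orderOf]
      congr 1
      ring
    rw [Finset.prod_congr rfl he]
    calc ∏ j ∈ T, (X - C (α ^ (2 * j % n)))
        = ∏ k ∈ T.image (fun j => 2 * j % n), (X - C (α ^ k)) := by
          rw [Finset.prod_image (fun a ha b hb hab =>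
            hdinj (Finset.mem_coe.mpr ha) (Finset.mem_coe.mpr hb) hab)]
      _ = ∏ k ∈ T, (X - C (α ^ k)) := by rw [himage]
  have hcoeff : ∀ k, g.coeff k ∈ Set.range ⇑(algebraMap (ZMod 2) (GaloisField 2 m)) := by
    intro k
    have h1 : (g.coeff k) ^ 2 = g.coeff k := by
      conv_rhs => rw [← hfrob]
      rw [Polynomial.coeff_map, frobenius_def]
    have h2 : g.coeff k * (g.coeff k - 1) = 0 := by
      rw [mul_sub, mul_one, ← sq, h1, sub_self]
    rcases mul_eq_zero.mp h2 with h3 | h3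
    · exact ⟨0, by rw [map_zero, h3]⟩
    · exact ⟨1, by rw [map_one, (sub_eq_zero.mp h3)]⟩
  obtain ⟨g₂, hg2map, hg2deg, hg2monic⟩ :=
    Polynomial.lifts_and_degree_eq_and_monic ((Polynomial.lifts_iff_coeff_lifts g).mpr hcoeff)
      hgmonic
  have hg2ne : g₂ ≠ 0 := hg2monic.ne_zero
  have hg2natdeg : g₂.natDegree = T.card := by
    rw [← hgdeg]
    exact natDegree_eq_of_degree_eq hg2deg
  have hinjmap : Function.Injective ⇑(algebraMap (ZMod 2) (GaloisField 2 m)) := (algebraMap (ZMod 2) (GaloisField 2 m)).injective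
  -- characterization of root conditions via divisibility
  have hchar : ∀ c : Polynomial (ZMod 2),
      (∀ j ∈ T, Polynomial.aeval (α ^ j) c = 0) ↔ g₂ ∣ c := by
    intro c
    constructor
    · intro hz
      rw [← Polynomial.map_dvd_map (algebraMap (ZMod 2) (GaloisField 2 m)) hinjmap hg2monic, hg2map]
      apply Finset.prod_dvd_of_coprime
      · intro j hj k hk hjk
        simp only [Finset.mem_coe] at hj hk
        apply Polynomial.isCoprime_X_sub_C_of_isUnit_sub
        apply isUnit_iff_ne_zero.mpr
        apply sub_ne_zero_of_ne
        intro hjk'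
        exact hjk (hrootinj j k (hTsub j hj) (hTsub k hk) hjk')
      · intro j hj
        rw [Polynomial.dvd_iff_isRoot]
        show Polynomial.eval (α ^ j) (Polynomial.map (algebraMap (ZMod 2) (GaloisField 2 m)) c) = 0
        rw [Polynomial.eval_map, ← Polynomial.aeval_def]
        exact hz j hj
    · intro hdvd j hj
      obtain ⟨q, rfl⟩ := hdvd
      rw [map_mul]
      have h1 : Polynomial.aeval (α ^ j) g₂ = 0 := by
        have h2 : Polynomial.aeval (α ^ j) g₂
            = Polynomial.eval (α ^ j) (Polynomial.map (algebraMap (ZMod 2) (GaloisField 2 m)) g₂) := by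
          rw [Polynomial.eval_map, ← Polynomial.aeval_def]
        rw [h2, hg2map, hg]
        rw [Polynomial.eval_prod]
        apply Finset.prod_eq_zero hj
        simp
      rw [h1, zero_mul]
  -- the code equals g₂ * degreeLT (n - T.card)
  have hTcard : T.card ≤ n := by
    have : T ⊆ Finset.range n := fun j hj => Finset.mem_range.mpr (hTsub j hj)
    calc T.card ≤ (Finset.range n).card := Finset.card_le_card this
      _ = n := Finset.card_range n
  set L : Polynomial (ZMod 2) →ₗ[ZMod 2] Polynomial (ZMod 2) :=
    LinearMap.mulLeft (ZMod 2) g₂ with hL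
  have hcode : cyclicCode m α ↑T
      = Submodule.map L (Polynomial.degreeLT (ZMod 2) (n - T.card)) := by
    apply le_antisymm
    · intro c hc
      rw [mem_cyclicCode] at hc
      obtain ⟨hdeg, hz⟩ := hc
      obtain ⟨q, rfl⟩ := (hchar c).mp hz
      rw [Submodule.mem_map]
      refine ⟨q, ?_, by rw [hL]; rfl⟩
      rw [Polynomial.mem_degreeLT]
      rcases eq_or_ne q 0 with rfl | hq
      · rw [Polynomial.degree_zero]
        exact WithBot.bot_lt_coe _
      have hgq : g₂ * q ≠ 0 := mul_ne_zero hg2ne hq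
      rw [Polynomial.mem_degreeLT] at hdeg
      rw [← Polynomial.natDegree_lt_iff_degree_lt hq]
      rw [← Polynomial.natDegree_lt_iff_degree_lt hgq] at hdeg
      rw [Polynomial.natDegree_mul hg2ne hq, hg2natdeg] at hdeg
      omega
    · intro c hc
      rw [Submodule.mem_map] at hc
      obtain ⟨q, hq, rfl⟩ := hc
      rw [mem_cyclicCode]
      constructor
      · show L q ∈ Polynomial.degreeLT (ZMod 2) n
        have hLq : L q = g₂ * q := rfl
        rw [hLq, Polynomial.mem_degreeLT]
        rcases eq_or_ne q 0 with rfl | hqne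
        · rw [mul_zero, Polynomial.degree_zero]
          exact WithBot.bot_lt_coe _
        have hgq : g₂ * q ≠ 0 := mul_ne_zero hg2ne hqne
        rw [← Polynomial.natDegree_lt_iff_degree_lt hgq]
        rw [Polynomial.mem_degreeLT, ← Polynomial.natDegree_lt_iff_degree_lt hqne] at hq
        rw [Polynomial.natDegree_mul hg2ne hqne, hg2natdeg]
        omega
      · intro j hj
        exact (hchar (L q)).mpr ⟨q, rfl⟩ j hj
  rw [hcode]
  have hLinj : Function.Injective ⇑L := by
    intro p q hpq
    have h1 : g₂ * p = g₂ * q := hpq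
    exact mul_left_cancel₀ hg2ne h1
  rw [← LinearEquiv.finrank_eq (Submodule.equivMapOfInjective L hLinj
    (Polynomial.degreeLT (ZMod 2) (n - T.card)))]
  rw [LinearEquiv.finrank_eq (Polynomial.degreeLTEquiv (ZMod 2) (n - T.card))]
  exact Module.finrank_fin_fun (ZMod 2)

lemma wt2_double_mod (m j : ℕ) (hm : 0 < m) (hj : j < 2 ^ m - 1) :
    wt2 (2 * j % (2 ^ m - 1)) = wt2 j := by
  have hp : (2:ℕ) ^ m = 2 * 2 ^ (m - 1) := by
    conv_lhs => rw [show m = (m - 1) + 1 by omega, pow_succ]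
    ring
  have hp1 : (1:ℕ) ≤ 2 ^ (m - 1) := Nat.one_le_two_pow
  rcases Nat.eq_zero_or_pos j with rfl | hj0
  · simp
  rcases Nat.lt_or_ge (2 * j) (2 ^ m - 1) with hlt | hge
  · rw [Nat.mod_eq_of_lt hlt, wt2_rec (2 * j) (by omega)]
    have e1 : 2 * j % 2 = 0 := by omega
    have e2 : 2 * j / 2 = j := by omega
    rw [e1, e2, zero_add]
  · have hmod : 2 * j % (2 ^ m - 1) = 2 * j - (2 ^ m - 1) := by
      rw [Nat.mod_eq_sub_mod hge]
      exact Nat.mod_eq_of_lt (by omega)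
    rw [hmod]
    have hjge : 2 ^ (m - 1) ≤ j := by omega
    set u := j - 2 ^ (m - 1) with hu
    have he : 2 * j - (2 ^ m - 1) = 2 * u + 1 := by omega
    rw [he, wt2_rec (2 * u + 1) (by omega)]
    have e1 : (2 * u + 1) % 2 = 1 := by omega
    have e2 : (2 * u + 1) / 2 = u := by omega
    rw [e1, e2]
    have hju : j = u + 2 ^ (m - 1) * 1 := by omega
    rw [hju, wt2_concat (m - 1) u 1 (by omega), wt2_one]
    omega

lemma gcd_odd_helper (h m : ℕ) (hh : h % 2 = 1) (hd : Nat.gcd h m ∣ 4) : Nat.gcd h m = 1 := by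
  have hpos : 0 < h := by omega
  have hgpos : 0 < Nat.gcd h m := Nat.gcd_pos_of_pos_left m hpos
  have hgodd : ¬ (2 ∣ Nat.gcd h m) := by
    intro h2
    obtain ⟨t3, ht3⟩ := h2.trans (Nat.gcd_dvd_left h m)
    omega
  obtain ⟨t, ht⟩ := hd
  have hle : Nat.gcd h m ≤ 4 := Nat.le_of_dvd (by norm_num) ⟨t, ht⟩
  set g := Nat.gcd h m with hg
  interval_cases g
  · rfl
  · exact absurd ⟨1, rfl⟩ hgodd
  · omega
  · exact absurd ⟨2, rfl⟩ hgodd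


theorem stmt9 (m l e : ℕ) (hl : 1 ≤ l) (he : Odd e) (hm : m = 2 ^ l * e) (hm2 : 2 < m)
    (α : GaloisField 2 m) (hα : orderOf α = 2 ^ m - 1) :
    Module.finrank (ZMod 2) ↥(cyclicCode m α (insert 0 (↑(Tset m 1) : Set ℕ))) =
      2 ^ (m - 1) - 2 ∧
    (2 ≤ l → minDistGE (cyclicCode m α (insert 0 (↑(Tset m 1) : Set ℕ)))
      (2 ^ (m / 2) + 2)) ∧
    (l = 1 → minDistGE (cyclicCode m α (insert 0 (↑(Tset m 1) : Set ℕ)))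
      (2 ^ ((m - 2) / 2) + 2)) := by
  have hpm : (1:ℕ) ≤ 2 ^ m := Nat.one_le_two_pow
  have hm0 : 0 < m := by omega
  have hme : m % 2 = 0 := by
    have h2l : (2:ℕ) ^ l = 2 * 2 ^ (l - 1) := by
      conv_lhs => rw [show l = (l - 1) + 1 by omega, pow_succ]
      ring
    have hm2e : m = 2 * (2 ^ (l - 1) * e) := by rw [hm, h2l]; ring
    omega
  have hn0 : 0 < 2 ^ m - 1 := by
    have : (2:ℕ) ^ 1 ≤ 2 ^ m := Nat.pow_le_pow_right (by norm_num) (by omega)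
    omega
  have h2m1 : (2:ℕ) ^ m = 2 * 2 ^ (m - 1) := by
    conv_lhs => rw [show m = (m - 1) + 1 by omega, pow_succ]
    ring
  have hm1ge : (4:ℕ) ≤ 2 ^ (m - 1) := by
    calc (4:ℕ) = 2 ^ 2 := by norm_num
      _ ≤ 2 ^ (m - 1) := Nat.pow_le_pow_right (by norm_num) (by omega)
  have hvv : ∀ i, i < 2 ^ m - 1 → (vv m i = 1 ↔ wt2 i % 2 = 1) := by
    intro i hi
    rw [vv_eq m i hm0 hi]
    have hle := wt2_le m i (by omega)
    omega
  have hT : Tset m 1 = (Finset.range (2 ^ m - 1)).filter (fun i => wt2 i % 2 = 1) := by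
    unfold Tset
    apply Finset.filter_congr
    intro x hx
    rw [Finset.mem_range] at hx
    exact hvv x hx
  have hcardT : (Tset m 1).card = 2 ^ (m - 1) := by
    rw [hT]; exact card_odd_wt_range_n m hm0 hme
  have h0T : (0:ℕ) ∉ Tset m 1 := by
    rw [hT]
    simp only [Finset.mem_filter, Finset.mem_range]
    rintro ⟨-, h⟩
    rw [wt2_zero] at h
    omega
  set T' : Finset ℕ := insert 0 (Tset m 1) with hT'
  have hsetT : (insert 0 (↑(Tset m 1) : Set ℕ)) = (↑T' : Set ℕ) := by
    rw [hT', Finset.coe_insert]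
  have hcardT' : T'.card = 2 ^ (m - 1) + 1 := by
    rw [hT', Finset.card_insert_of_notMem h0T, hcardT]
  have hTsub : ∀ j ∈ T', j < 2 ^ m - 1 := by
    intro j hj
    rw [hT', Finset.mem_insert] at hj
    rcases hj with rfl | hj
    · omega
    · rw [hT, Finset.mem_filter, Finset.mem_range] at hj; exact hj.1
  have hTcl : ∀ j ∈ T', 2 * j % (2 ^ m - 1) ∈ T' := by
    intro j hj
    rw [hT', Finset.mem_insert] at hj ⊢
    rcases hj with rfl | hj
    · left; simp
    · right
      rw [hT, Finset.mem_filter, Finset.mem_range] at hj ⊢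
      refine ⟨Nat.mod_lt _ hn0, ?_⟩
      rw [wt2_double_mod m j hm0 hj.1]
      exact hj.2
  have hmem : ∀ h : ℕ, 1 ≤ h → h % 2 = 1 → 2 * h + 2 ≤ m →
      ∀ j : ℕ, j ≤ 2 ^ (h + 1) →
      ((2 ^ m - 1 - 2 ^ h * (2 ^ h - 1)) + j * (2 ^ h - 1)) % (2 ^ m - 1) ∈ T' := by
    intro h hh1 hhodd hhm j hjD
    set n := 2 ^ m - 1 with hn
    set a := 2 ^ h - 1 with ha
    have hh2 : (2:ℕ) ≤ 2 ^ h := by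
      calc (2:ℕ) = 2 ^ 1 := by norm_num
        _ ≤ 2 ^ h := Nat.pow_le_pow_right (by norm_num) hh1
    have hapos : 1 ≤ a := by omega
    have hsq : 2 ^ h * 2 ^ h * 4 ≤ 2 ^ m := by
      calc 2 ^ h * 2 ^ h * 4 = 2 ^ (h + h + 2) := by rw [pow_add, pow_add]; norm_num
        _ ≤ 2 ^ m := Nat.pow_le_pow_right (by norm_num) (by omega)
    have hbound : 2 ^ h * a + a ≤ 2 ^ h * 2 ^ h := by
      have hx : 2 ^ h * a = 2 ^ h * 2 ^ h - 2 ^ h := by rw [ha, Nat.mul_sub, mul_one]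
      have hQ : 2 ^ h ≤ 2 ^ h * 2 ^ h := Nat.le_mul_of_pos_left _ (by omega)
      omega
    rcases Nat.lt_or_ge j (2 ^ h) with hjlt | hjge
    · set u := 2 ^ h - j with hu
      have hu1 : 1 ≤ u := by omega
      have hu2 : u ≤ 2 ^ h := by omega
      have hsum : u * a + j * a = 2 ^ h * a := by
        rw [← Nat.add_mul]
        congr 1
        omega
      have hval : (n - 2 ^ h * a) + j * a = n - u * a := by omega
      rw [hval]
      have hwta : wt2 (u * a) = h := wt2_mul_pred_pow h u hu1 hu2
      have huapos : 0 < u * a := Nat.mul_pos (by omega) (by omega)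
      have hlt : n - u * a < n := by omega
      rw [Nat.mod_eq_of_lt hlt]
      rw [hT', Finset.mem_insert]
      right
      rw [hT, Finset.mem_filter, Finset.mem_range]
      refine ⟨hlt, ?_⟩
      have hcompl := wt2_compl m (u * a) (by omega)
      have heq2 : n - u * a = 2 ^ m - 1 - u * a := by rw [hn]
      rw [heq2]
      rw [hwta] at hcompl
      omega
    · rcases Nat.eq_or_lt_of_le hjge with heq | hjgt
      · have hval : (n - 2 ^ h * a) + j * a = n := by
          rw [← heq]
          omega
        rw [hval, Nat.mod_self, hT', Finset.mem_insert]
        left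
        rfl
      · set u := j - 2 ^ h with hu
        have hu1 : 1 ≤ u := by omega
        have hu2 : u ≤ 2 ^ h := by omega
        have hsum : 2 ^ h * a + u * a = j * a := by
          rw [← Nat.add_mul]
          congr 1
          omega
        have h1 : u * a ≤ 2 ^ h * a := Nat.mul_le_mul_right a hu2
        have hval : (n - 2 ^ h * a) + j * a = n + u * a := by omega
        rw [hval, Nat.add_mod_left]
        have hwta : wt2 (u * a) = h := wt2_mul_pred_pow h u hu1 hu2
        have hlt : u * a < n := by omega
        rw [Nat.mod_eq_of_lt hlt, hT', Finset.mem_insert]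
        right
        rw [hT, Finset.mem_filter, Finset.mem_range]
        exact ⟨hlt, by rw [hwta]; omega⟩
  have hdist : ∀ h : ℕ, 1 ≤ h → h % 2 = 1 → 2 * h + 2 ≤ m → Nat.gcd h m = 1 →
      minDistGE (cyclicCode m α ↑T') (2 ^ (h + 1) + 2) := by
    intro h hh1 hhodd hhm hgcd
    intro c hc hcne
    have hc' := (mem_cyclicCode m α T' c).mp hc
    have hcop : Nat.Coprime (2 ^ h - 1) (2 ^ m - 1) := by
      unfold Nat.Coprime
      rw [gcd_two_pow_sub_one h m, hgcd]
      norm_num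
    have hb := bch_bound m hm0 α hα (2 ^ h - 1) (2 ^ m - 1 - 2 ^ h * (2 ^ h - 1)) (2 ^ (h + 1))
      hcop c hc'.1 (fun j hj => hc'.2 _ (hmem h hh1 hhodd hhm j hj)) hcne
    exact hb
  refine ⟨?_, ?_, ?_⟩
  · rw [hsetT, cyclic_dim m hm0 α hα T' hTsub hTcl, hcardT']
    omega
  · intro hl2
    have hm4 : m % 4 = 0 := by
      have h4 : (2:ℕ) ^ l = 4 * 2 ^ (l - 2) := by
        conv_lhs => rw [show l = 2 + (l - 2) by omega, pow_add]
        norm_num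
      have hm4e : m = 4 * (2 ^ (l - 2) * e) := by rw [hm, h4]; ring
      omega
    have hh1 : 1 ≤ m / 2 - 1 := by omega
    have hhodd : (m / 2 - 1) % 2 = 1 := by omega
    have hhm : 2 * (m / 2 - 1) + 2 ≤ m := by omega
    have hgcd : Nat.gcd (m / 2 - 1) m = 1 := by
      apply gcd_odd_helper _ m hhodd
      have hd2 : Nat.gcd (m / 2 - 1) m ∣ 2 * (m / 2 - 1) :=
        Dvd.dvd.mul_left (Nat.gcd_dvd_left _ m) 2
      have hdm : Nat.gcd (m / 2 - 1) m ∣ m := Nat.gcd_dvd_right _ m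
      have hsub : Nat.gcd (m / 2 - 1) m ∣ m - 2 * (m / 2 - 1) := Nat.dvd_sub hdm hd2
      have he2 : m - 2 * (m / 2 - 1) = 2 := by omega
      rw [he2] at hsub
      exact hsub.trans ⟨2, rfl⟩
    have hd := hdist (m / 2 - 1) hh1 hhodd hhm hgcd
    rw [hsetT]
    have hexp : 2 ^ (m / 2) = 2 ^ ((m / 2 - 1) + 1) := by congr 1; omega
    rw [hexp]
    exact hd
  · intro hl1
    have hm2e : m = 2 * e := by rw [hm, hl1]; ring
    have hm4 : m % 4 = 2 := by
      obtain ⟨k, hk⟩ := he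
      omega
    have hh1 : 1 ≤ m / 2 - 2 := by omega
    have hhodd : (m / 2 - 2) % 2 = 1 := by omega
    have hhm : 2 * (m / 2 - 2) + 2 ≤ m := by omega
    have hgcd : Nat.gcd (m / 2 - 2) m = 1 := by
      apply gcd_odd_helper _ m hhodd
      have hd2 : Nat.gcd (m / 2 - 2) m ∣ 2 * (m / 2 - 2) :=
        Dvd.dvd.mul_left (Nat.gcd_dvd_left _ m) 2
      have hdm : Nat.gcd (m / 2 - 2) m ∣ m := Nat.gcd_dvd_right _ m
      have hsub : Nat.gcd (m / 2 - 2) m ∣ m - 2 * (m / 2 - 2) := Nat.dvd_sub hdm hd2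
      have he2 : m - 2 * (m / 2 - 2) = 4 := by omega
      rw [he2] at hsub
      exact hsub
    have hd := hdist (m / 2 - 2) hh1 hhodd hhm hgcd
    rw [hsetT]
    have hexp : 2 ^ ((m - 2) / 2) = 2 ^ ((m / 2 - 2) + 1) := by congr 1; omega
    rw [hexp]
    exact hd
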